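/- Forest-count inequality underlying the bankruptcy bound: let (V, ι, ε) be a finite loopless multigraph, let v ∈ V, and let d_v be the number of edges incident to v, i.e., d_v = |{e ∈ ι | v ∈ ε e}|. Then the number of subsets F ⊆ ι that are forests is at least (d_v + 1) times the number of subsets F ⊆ ι that are forests and contain no edge incident to v. -/

import Mathlib

/-- A subset `F` of the edge indices of a multigraph with endpoint map `ε` is a forest if it
contains no cycle: no `k ≥ 2` pairwise distinct vertices `v₀, …, v_{k−1}` and pairwise
distinct edges `e₀, …, e_{k−1} ∈ F` with `ε eᵢ = {vᵢ, v_{(i+1) mod k}}`. -/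
def IsForest {V ι : Type*} (ε : ι → Sym2 V) (F : Finset ι) : Prop :=
  ¬ ∃ (k : ℕ) (v : Fin (k + 2) → V) (e : Fin (k + 2) → ι),
      Function.Injective v ∧ Function.Injective e ∧
      (∀ i, e i ∈ F) ∧ ∀ i, ε (e i) = s(v i, v (i + 1))

lemma forest_insert {V ι : Type*} [DecidableEq ι] (ε : ι → Sym2 V) (v : V) {F : Finset ι}
    (hF : IsForest ε F) (hFv : ∀ e ∈ F, v ∉ ε e) {e : ι} (he : v ∈ ε e) :
    IsForest ε (insert e F) := by
  rintro ⟨k, w, f, hw, hf, hmem, hεf⟩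
  by_cases hall : ∀ i, f i ∈ F
  · exact hF ⟨k, w, f, hw, hf, hall, hεf⟩
  push_neg at hall
  obtain ⟨j, hj⟩ := hall
  have hje : f j = e := by
    have := hmem j; rw [Finset.mem_insert] at this; tauto
  have h10 : (1 : Fin (k+2)) ≠ 0 := by simp [Fin.ext_iff]
  have hv : v = w j ∨ v = w (j+1) := by
    have h := hεf j; rw [hje] at h; rw [h] at he
    simpa [Sym2.mem_iff] using he
  rcases hv with hv | hv
  · have hne : f (j-1) ≠ e := by
      rw [← hje]; intro h
      have := hf h
      rw [sub_eq_self] at this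
      exact h10 this
    have hmem' : f (j-1) ∈ F := by
      have := hmem (j-1); rw [Finset.mem_insert] at this; tauto
    have : v ∈ ε (f (j-1)) := by
      rw [hεf (j-1), sub_add_cancel, ← hv]
      simp
    exact hFv _ hmem' this
  · have hne : f (j+1) ≠ e := by
      rw [← hje]; intro h
      have h' := hf h
      have h2 : j + 1 = j + 0 := by simpa using h'
      exact h10 (add_left_cancel h2)
    have hmem' : f (j+1) ∈ F := by
      have := hmem (j+1); rw [Finset.mem_insert] at this; tauto
    have : v ∈ ε (f (j+1)) := by
      rw [hεf (j+1), ← hv]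
      simp
    exact hFv _ hmem' this

/-- The number of forests of a finite loopless multigraph is at least `(d_v + 1)` times the
number of forests containing no edge incident to `v`. -/
theorem stmt7 {V ι : Type*} [Fintype V] [Fintype ι]
    (ε : ι → Sym2 V) (hε : ∀ e : ι, ¬ (ε e).IsDiag) (v : V) :
    ({e : ι | v ∈ ε e}.ncard + 1) *
        {F : Finset ι | IsForest ε F ∧ ∀ e ∈ F, v ∉ ε e}.ncard ≤
      {F : Finset ι | IsForest ε F}.ncard := by
  classical
  set D : Finset ι := Finset.univ.filter (fun e => v ∈ ε e) with hD
  set Sf : Finset (Finset ι) :=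
    Finset.univ.filter (fun F => IsForest ε F ∧ ∀ e ∈ F, v ∉ ε e) with hS
  set Tf : Finset (Finset ι) := Finset.univ.filter (fun F => IsForest ε F) with hT
  have h1 : {e : ι | v ∈ ε e}.ncard = D.card := by
    rw [Set.ncard_eq_toFinset_card']
    congr 1
    ext e; simp [hD]
  have h2 : {F : Finset ι | IsForest ε F ∧ ∀ e ∈ F, v ∉ ε e}.ncard = Sf.card := by
    rw [Set.ncard_eq_toFinset_card']
    congr 1
    ext F; simp [hS]
  have h3 : {F : Finset ι | IsForest ε F}.ncard = Tf.card := by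
    rw [Set.ncard_eq_toFinset_card']
    congr 1
    ext F; simp [hT]
  rw [h1, h2, h3]
  set g : Option ι × Finset ι → Finset ι :=
    fun p => p.1.elim p.2 (fun e => insert e p.2) with hg
  set P : Finset (Option ι × Finset ι) := (insert none (D.image some)) ×ˢ Sf with hP
  have hcard : P.card = (D.card + 1) * Sf.card := by
    rw [hP, Finset.card_product, Finset.card_insert_of_notMem (by simp),
      Finset.card_image_of_injective _ (Option.some_injective ι)]
  rw [← hcard]
  apply Finset.card_le_card_of_injOn g
  · rintro ⟨o, F⟩ hp
    rw [Finset.mem_coe, hP, Finset.mem_product, Finset.mem_insert] at hp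
    obtain ⟨ho, hF⟩ := hp
    rw [hS, Finset.mem_filter] at hF
    obtain ⟨-, hFforest, hFv⟩ := hF
    rw [Finset.mem_coe, hT, Finset.mem_filter]
    rcases ho with rfl | ho
    · exact ⟨Finset.mem_univ _, hFforest⟩
    · simp only [Finset.mem_image] at ho
      obtain ⟨e, he, rfl⟩ := ho
      rw [hD, Finset.mem_filter] at he
      exact ⟨Finset.mem_univ _, forest_insert ε v hFforest hFv he.2⟩
  · rintro ⟨o1, F1⟩ hp1 ⟨o2, F2⟩ hp2 heq
    simp only [hP, Finset.mem_coe, Finset.mem_product, Finset.mem_insert] at hp1 hp2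
    obtain ⟨ho1, hF1⟩ := hp1
    obtain ⟨ho2, hF2⟩ := hp2
    rw [hS, Finset.mem_filter] at hF1 hF2
    have key : ∀ (o : Option ι) (F : Finset ι),
        (o = none ∨ o ∈ D.image some) → (∀ e ∈ F, v ∉ ε e) →
        (g (o, F)).filter (fun x => v ∈ ε x) = o.elim ∅ (fun e => {e}) ∧
        (g (o, F)).filter (fun x => v ∉ ε x) = F := by
      rintro o F ho hFv
      rcases o with _ | a
      · constructor
        · show F.filter (fun x => v ∈ ε x) = ∅
          rw [Finset.filter_eq_empty_iff]; exact fun x hx => hFv x hx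
        · show F.filter (fun x => v ∉ ε x) = F
          rw [Finset.filter_eq_self]; exact hFv
      · simp only [Finset.mem_image, reduceCtorEq, false_or] at ho
        obtain ⟨e', he', he''⟩ := ho
        obtain rfl : e' = a := Option.some_injective ι he''
        rw [hD, Finset.mem_filter] at he'
        constructor
        · show (insert e' F).filter (fun x => v ∈ ε x) = {e'}
          rw [Finset.filter_insert, if_pos he'.2,
            Finset.filter_eq_empty_iff.mpr (fun x hx => hFv x hx)]
          rfl
        · show (insert e' F).filter (fun x => v ∉ ε x) = F
          rw [Finset.filter_insert, if_neg (not_not_intro he'.2),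
            Finset.filter_eq_self.mpr hFv]
    obtain ⟨k1a, k1b⟩ := key o1 F1 ho1 hF1.2.2
    obtain ⟨k2a, k2b⟩ := key o2 F2 ho2 hF2.2.2
    have hoeq : o1 = o2 := by
      rw [heq, k2a] at k1a
      exact match o1, o2, k1a with
      | none, none, _ => rfl
      | none, some e2, h => absurd h (Finset.singleton_ne_empty e2)
      | some e1, none, h => absurd h.symm (Finset.singleton_ne_empty e1)
      | some e1, some e2, h => congrArg some (Finset.singleton_inj.mp h).symm
    have hFeq : F1 = F2 := by
      rw [heq, k2b] at k1b; exact k1b.symm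
    rw [hoeq, hFeq]
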